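/- If a preflow f admits a valid labeling d, then the sink t is not residually reachable from the source s (there is no augmenting path with respect to f). -/

import Mathlib

open Finset

variable {V : Type*} [Fintype V] [DecidableEq V]

/-- A preflow: capacity-respecting, antisymmetric, with nonnegative excess at
every vertex other than the source. -/
def IsPreflow (c : V → V → ℝ) (s : V) (f : V → V → ℝ) : Prop :=
  (∀ u v, f u v ≤ c u v) ∧ (∀ u v, f u v = - f v u) ∧
    ∀ v, v ≠ s → 0 ≤ ∑ u, f u v

/-- The excess of `f` at a vertex `v`. -/
def excess (f : V → V → ℝ) (v : V) : ℝ := ∑ u, f u v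

/-- A valid labeling for `f`: `d t = 0`, `d s = card V`, and `d u ≤ d v + 1`
along every residual edge. -/
def IsValidLabeling (c : V → V → ℝ) (s t : V) (f : V → V → ℝ) (d : V → ℕ) : Prop :=
  d t = 0 ∧ d s = Fintype.card V ∧ ∀ u v, 0 < c u v - f u v → d u ≤ d v + 1

/-- A residual path from `a` to `b` of length `k` w.r.t. `f`. -/
def IsResidualPath (c f : V → V → ℝ) (a b : V) (k : ℕ) (p : Fin (k + 1) → V) : Prop :=
  p 0 = a ∧ p (Fin.last k) = b ∧
    ∀ i : Fin k, 0 < c (p i.castSucc) (p i.succ) - f (p i.castSucc) (p i.succ)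

/-- `b` is residually reachable from `a`: `(a, b)` lies in the
reflexive-transitive closure of the residual-edge relation. -/
def ResReach (c f : V → V → ℝ) (a b : V) : Prop :=
  Relation.ReflTransGen (fun u v => 0 < c u v - f u v) a b

private lemma duplicate_decomp {α : Type*} {x : α} {l : List α} (h : List.Duplicate x l) :
    ∃ l₁ l₂ l₃ : List α, l = l₁ ++ x :: l₂ ++ x :: l₃ := by
  induction h with
  | cons_mem hm =>
    obtain ⟨s, t, rfl⟩ := List.append_of_mem hm
    exact ⟨[], s, t, rfl⟩
  | cons_duplicate _ ih =>
    obtain ⟨l₁, l₂, l₃, rfl⟩ := ih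
    exact ⟨_ :: l₁, l₂, l₃, rfl⟩

private lemma exists_nodup_chain' {α : Type*} {r : α → α → Prop} {a b : α}
    (h : Relation.ReflTransGen r a b) :
    ∃ L : List α, L.Chain' r ∧ L.head? = some a ∧ L.getLast? = some b ∧ L.Nodup := by
  obtain ⟨l, hl, hlast⟩ := List.exists_isChain_cons_of_relationReflTransGen h
  have key : ∀ n (L : List α), L.length = n → L.Chain' r → L.head? = some a →
      L.getLast? = some b → ∃ L' : List α, L'.Chain' r ∧ L'.head? = some a ∧
        L'.getLast? = some b ∧ L'.Nodup := by
    intro n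
    induction n using Nat.strong_induction_on with
    | _ n ih =>
      intro L hlen hch hh hlast
      by_cases hnd : L.Nodup
      · exact ⟨L, hch, hh, hlast, hnd⟩
      · obtain ⟨x, hx⟩ := List.exists_duplicate_iff_not_nodup.2 hnd
        obtain ⟨l₁, l₂, l₃, rfl⟩ := duplicate_decomp hx
        refine ih (l₁ ++ x :: l₃).length ?_ _ rfl ?_ ?_ ?_
        · subst hlen; simp
        · have hch' : List.Chain' r (l₁ ++ x :: (l₂ ++ x :: l₃)) := by
            simpa [List.append_assoc] using hch
          have h1 := (List.isChain_split (l₁ := l₁) (c := x) (l₂ := l₂ ++ x :: l₃)).1 hch'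
          have h2 : List.Chain' r ((x :: l₂) ++ x :: l₃) := h1.2
          exact List.isChain_split.2 ⟨h1.1, (List.isChain_split.1 h2).2⟩
        · cases l₁ with
          | nil => simpa using hh
          | cons y l₁' => simpa using hh
        · rw [List.getLast?_append_of_ne_nil _ (List.cons_ne_nil x l₃)]
          rw [show l₁ ++ x :: l₂ ++ x :: l₃ = (l₁ ++ x :: l₂) ++ x :: l₃ by simp] at hlast
          rwa [List.getLast?_append_of_ne_nil _ (List.cons_ne_nil x l₃)] at hlast
  refine key (a :: l).length (a :: l) rfl hl rfl ?_
  rw [List.getLast?_eq_getLast (List.cons_ne_nil a l), hlast]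

private lemma chain'_label_le {α : Type*} {r : α → α → Prop} {d : α → ℕ}
    (hd : ∀ u v, r u v → d u ≤ d v + 1) :
    ∀ (L : List α) (a b : α), L.Chain' r → L.head? = some a → L.getLast? = some b →
      d a ≤ d b + (L.length - 1) := by
  intro L
  induction L with
  | nil => intro a b _ h; simp at h
  | cons x L ih =>
    intro a b hch hh hlast
    cases L with
    | nil =>
      simp only [List.head?_cons, Option.some.injEq] at hh
      simp only [List.getLast?_singleton, Option.some.injEq] at hlast
      subst hh; subst hlast; simp
    | cons y L' =>
      simp only [List.head?_cons, Option.some.injEq] at hh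
      subst hh
      have hxy : r x y := (List.isChain_cons_cons.1 hch).1
      have hih := ih y b (List.isChain_cons_cons.1 hch).2 rfl (by rwa [List.getLast?_cons_cons] at hlast)
      have hstep := hd x y hxy
      simp only [List.length_cons] at hih ⊢
      omega

/-- If a preflow admits a valid labeling, then there is no augmenting path:
the sink is not residually reachable from the source. -/
theorem no_augpath_of_validLabeling (c : V → V → ℝ) (s t : V) (hst : s ≠ t)
    (hc : ∀ u v, 0 ≤ c u v) (f : V → V → ℝ) (hf : IsPreflow c s f)
    (d : V → ℕ) (hd : IsValidLabeling c s t f d) :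
    ¬ ResReach c f s t := by
  intro h
  obtain ⟨hdt, hds, hed⟩ := hd
  obtain ⟨L, hch, hh, hlast, hnd⟩ := exists_nodup_chain' h
  have hlen : L.length ≤ Fintype.card V := hnd.length_le_card
  have hL1 : 1 ≤ L.length := by
    cases L with
    | nil => simp at hh
    | cons x l => simp
  have := chain'_label_le hed L s t hch hh hlast
  rw [hdt, hds] at this
  have hcard : 1 ≤ Fintype.card V := Fintype.card_pos_iff.2 ⟨s⟩
  omega
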